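/- Let d be a positive normed martingale, U its (d,q)-winning set for some q > 1. Define D inductively by D(ε)=1 and D(στ) = D(σ)·d(τι)/d(τ) where σ = ρτ with ρ a concatenation of strings in U and τ having no prefix in U (this decomposition is unique since U is prefix-free). Then D is a martingale, and if σ is a concatenation of k strings of U then D(σ) ≥ q^k. Consequently D succeeds on every X ∈ U^ω. -/

import Mathlib

open scoped ENNReal
open MeasureTheory Filter

def cyl (σ : List Bool) : Set (ℕ → Bool) :=
  {X | ∀ i : Fin σ.length, X i = σ.get i}

def opensOf (U : Set (List Bool)) : Set (ℕ → Bool) :=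
  ⋃ σ ∈ U, cyl σ

def PrefixFree (U : Set (List Bool)) : Prop :=
  ∀ σ ∈ U, ∀ τ ∈ U, σ <+: τ → σ = τ

def IsUniform (μ : Measure (ℕ → Bool)) : Prop :=
  ∀ σ : List Bool, μ (cyl σ) = (1 / 2 : ℝ≥0∞) ^ σ.length

def concatN (U : Set (List Bool)) (n : ℕ) : Set (List Bool) :=
  {σ | ∃ l : List (List Bool), l.length = n ∧ (∀ τ ∈ l, τ ∈ U) ∧ σ = l.flatten}

def seqTake (X : ℕ → Bool) (n : ℕ) : List Bool := List.ofFn fun i : Fin n => X i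

def seqAppend (σ : List Bool) (Y : ℕ → Bool) : ℕ → Bool :=
  fun n => if h : n < σ.length then σ.get ⟨n, h⟩ else Y (n - σ.length)

def prefixOfSeq (σ : List Bool) (X : ℕ → Bool) : Prop :=
  ∀ i : Fin σ.length, X i = σ.get i

def concatOmega (U : Set (List Bool)) : Set (ℕ → Bool) :=
  {X | ∃ f : ℕ → List Bool, (∀ i, f i ∈ U) ∧
    ∀ n : ℕ, prefixOfSeq (((List.range n).map f).flatten) X}

def IsMartingale (d : List Bool → ℝ) : Prop :=
  (∀ σ, 0 ≤ d σ) ∧ ∀ σ, d σ = (d (σ ++ [false]) + d (σ ++ [true])) / 2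

def Succeeds (d : List Bool → ℝ) (X : ℕ → Bool) : Prop :=
  ∀ C : ℝ, ∀ m : ℕ, ∃ n ≥ m, C ≤ d (seqTake X n)

def winningSet (d : List Bool → ℝ) (q : ℝ) : Set (List Bool) :=
  {σ | q ≤ d σ ∧ ∀ τ : List Bool, τ <+: σ → τ ≠ σ → d τ < q}



open scoped Classical

noncomputable def tlRev (U : Set (List Bool)) : List Bool → List Bool
  | [] => []
  | b :: r => if (tlRev U r ++ [b]) ∈ U then [] else tlRev U r ++ [b]

noncomputable def DRev (d : List Bool → ℝ) (U : Set (List Bool)) : List Bool → ℝ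
  | [] => 1
  | b :: r => DRev d U r * d (tlRev U r ++ [b]) / d (tlRev U r)

noncomputable def tl (U : Set (List Bool)) (σ : List Bool) : List Bool := tlRev U σ.reverse
noncomputable def Dfun (d : List Bool → ℝ) (U : Set (List Bool)) (σ : List Bool) : ℝ :=
  DRev d U σ.reverse

lemma tl_nil (U : Set (List Bool)) : tl U [] = [] := rfl
lemma Dfun_nil (d : List Bool → ℝ) (U : Set (List Bool)) : Dfun d U [] = 1 := rfl

lemma tl_append (U : Set (List Bool)) (σ : List Bool) (b : Bool) :
    tl U (σ ++ [b]) = if (tl U σ ++ [b]) ∈ U then [] else tl U σ ++ [b] := by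
  simp [tl, tlRev, List.reverse_append]
  exact if_congr Iff.rfl rfl rfl

lemma Dfun_append (d : List Bool → ℝ) (U : Set (List Bool)) (σ : List Bool) (b : Bool) :
    Dfun d U (σ ++ [b]) = Dfun d U σ * d (tl U σ ++ [b]) / d (tl U σ) := by
  simp [Dfun, tl, DRev, List.reverse_append]

lemma Dfun_pos (d : List Bool → ℝ) (U : Set (List Bool)) (hpos : ∀ σ, 0 < d σ) :
    ∀ σ, 0 < Dfun d U σ := by
  intro σ
  induction σ using List.reverseRecOn with
  | nil => norm_num [Dfun_nil]
  | append_singleton σ b ih =>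
      rw [Dfun_append]
      exact div_pos (mul_pos ih (hpos _)) (hpos _)

lemma Dfun_key (d : List Bool → ℝ) (U : Set (List Bool)) (hpos : ∀ σ, 0 < d σ)
    (hnorm : d [] = 1) :
    ∀ τ σ, tl U σ = [] → (∀ p, p <+: τ → p ≠ [] → p ∉ U) →
      tl U (σ ++ τ) = τ ∧ Dfun d U (σ ++ τ) = Dfun d U σ * d τ := by
  intro τ
  induction τ using List.reverseRecOn with
  | nil => intro σ h _; refine ⟨by simpa using h, by simp [hnorm]⟩
  | append_singleton τ b ih =>
      intro σ h hp
      obtain ⟨h1, h2⟩ := ih σ h (fun p hpre hne => hp p (hpre.trans (List.prefix_append _ _)) hne)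
      have hnotin : τ ++ [b] ∉ U := hp _ List.prefix_rfl (by simp)
      constructor
      · rw [← List.append_assoc, tl_append, h1, if_neg hnotin]
      · rw [← List.append_assoc, Dfun_append, h1, h2]
        have hτ : d τ ≠ 0 := (hpos τ).ne'
        field_simp

lemma winning_ne_nil {d : List Bool → ℝ} {q : ℝ} (hnorm : d [] = 1) (hq : 1 < q)
    {τ : List Bool} (hτ : τ ∈ winningSet d q) : τ ≠ [] := by
  rintro rfl
  exact absurd (hnorm ▸ hτ.1) (not_le.mpr hq)

lemma Dfun_block (d : List Bool → ℝ) (hpos : ∀ σ, 0 < d σ) (hnorm : d [] = 1)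
    (q : ℝ) (hq : 1 < q) (σ τ : List Bool) (h : tl (winningSet d q) σ = [])
    (hτ : τ ∈ winningSet d q) :
    tl (winningSet d q) (σ ++ τ) = [] ∧
      Dfun d (winningSet d q) (σ ++ τ) = Dfun d (winningSet d q) σ * d τ := by
  obtain ⟨τ', b, rfl⟩ := (List.eq_nil_or_concat τ).resolve_left (winning_ne_nil hnorm hq hτ)
  simp only [List.concat_eq_append] at hτ ⊢
  have hprop : ∀ p, p <+: τ' → p ≠ [] → p ∉ winningSet d q := by
    intro p hpre _ hpU
    have hlt : d p < q := hτ.2 p (hpre.trans (List.prefix_append _ _)) (by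
      rintro rfl
      have := hpre.length_le
      simp at this)
    exact absurd hpU.1 (not_le.mpr hlt)
  obtain ⟨h1, h2⟩ := Dfun_key d (winningSet d q) hpos hnorm τ' σ h hprop
  constructor
  · rw [← List.append_assoc, tl_append, h1, if_pos hτ]
  · rw [← List.append_assoc, Dfun_append, h1, h2]
    have hτ' : d τ' ≠ 0 := (hpos τ').ne'
    field_simp

lemma Dfun_concat (d : List Bool → ℝ) (hpos : ∀ σ, 0 < d σ) (hnorm : d [] = 1)
    (q : ℝ) (hq : 1 < q) :
    ∀ l : List (List Bool), (∀ τ ∈ l, τ ∈ winningSet d q) →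
      tl (winningSet d q) l.flatten = [] ∧
        q ^ l.length ≤ Dfun d (winningSet d q) l.flatten := by
  intro l
  induction l using List.reverseRecOn with
  | nil => intro _; exact ⟨rfl, by norm_num [Dfun_nil]⟩
  | append_singleton l τ ih =>
      intro hl
      obtain ⟨h1, h2⟩ := ih (fun τ' hτ' => hl τ' (by simp [hτ']))
      have hτ : τ ∈ winningSet d q := hl τ (by simp)
      obtain ⟨g1, g2⟩ := Dfun_block d hpos hnorm q hq l.flatten τ h1 hτ
      rw [List.flatten_append, List.flatten_cons, List.flatten_nil, List.append_nil]
      refine ⟨g1, ?_⟩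
      rw [g2]
      simp only [List.length_append, List.length_cons, List.length_nil, pow_succ, Nat.zero_add]
      exact mul_le_mul h2 hτ.1 (le_of_lt (lt_trans one_pos hq))
        (le_of_lt (Dfun_pos d _ hpos _))

lemma length_le_flatten_length {l : List (List Bool)} (h : ∀ τ ∈ l, τ ≠ []) :
    l.length ≤ l.flatten.length := by
  induction l with
  | nil => simp
  | cons a l ih =>
      have ha : 1 ≤ a.length := by
        have := h a (by simp)
        cases a with
        | nil => exact absurd rfl this
        | cons x xs => simp
      simp only [List.flatten_cons, List.length_append, List.length_cons]
      have := ih (fun τ hτ => h τ (by simp [hτ]))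
      omega


theorem stmt8 (d : List Bool → ℝ) (hd : IsMartingale d) (hpos : ∀ σ, 0 < d σ)
    (hnorm : d [] = 1) (q : ℝ) (hq : 1 < q) :
    ∃ D : List Bool → ℝ, IsMartingale D ∧ D [] = 1 ∧
      (∀ (k : ℕ) (σ : List Bool), σ ∈ concatN (winningSet d q) k → q ^ k ≤ D σ) ∧
      ∀ X ∈ concatOmega (winningSet d q), Succeeds D X := by
  refine ⟨Dfun d (winningSet d q), ⟨fun σ => (Dfun_pos d _ hpos σ).le, fun σ => ?_⟩,
    Dfun_nil d _, fun k σ hσ => ?_, fun X hX C m => ?_⟩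
  · set U := winningSet d q
    have hne : d (tl U σ) ≠ 0 := (hpos _).ne'
    have e : d (tl U σ ++ [false]) + d (tl U σ ++ [true]) = 2 * d (tl U σ) := by
      have := hd.2 (tl U σ); linarith
    rw [Dfun_append, Dfun_append, ← add_div, ← mul_add, e]
    field_simp
  · obtain ⟨l, hlen, hmem, rfl⟩ := hσ
    have h := (Dfun_concat d hpos hnorm q hq l hmem).2
    rwa [hlen] at h
  · obtain ⟨f, hf, hpre⟩ := hX
    obtain ⟨N0, hN0⟩ := pow_unbounded_of_one_lt C hq
    set N := max m N0 with hN
    set l := (List.range N).map f with hl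
    have hmem : ∀ τ ∈ l, τ ∈ winningSet d q := by
      intro τ hτ
      rw [hl, List.mem_map] at hτ
      obtain ⟨i, _, rfl⟩ := hτ
      exact hf i
    have hlN : l.length = N := by simp [hl]
    have hlen : N ≤ l.flatten.length := by
      have h := length_le_flatten_length (fun τ hτ => winning_ne_nil hnorm hq (hmem τ hτ))
      omega
    refine ⟨l.flatten.length, le_trans (le_max_left m N0) hlen, ?_⟩
    have hseq : seqTake X l.flatten.length = l.flatten := by
      apply List.ext_get (by simp [seqTake])
      intro n h1 h2
      have hx := hpre N ⟨n, h2⟩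
      simpa [seqTake] using hx
    rw [hseq]
    have hD := (Dfun_concat d hpos hnorm q hq l hmem).2
    rw [hlN] at hD
    calc C ≤ q ^ N0 := hN0.le
      _ ≤ q ^ N := pow_le_pow_right₀ hq.le (le_max_right m N0)
      _ ≤ _ := hD
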